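/- Let (g, g₀) be an effective pair of Lie algebras over a field, let p be a Lie subalgebra of g with g₀ strictly contained in p such that no Lie subalgebra of g lies strictly between g₀ and p (p is a minimal overalgebra of g₀), and let a be a nonzero ideal of g with a ⊆ p. Then g₀ + a = p, and consequently the codimension of a ∩ g₀ in a equals the codimension of g₀ in p. -/

import Mathlib

/-- Let `(g, g₀)` be an effective pair, `p` a minimal overalgebra of `g₀`, and `a`
a nonzero ideal of `g` contained in `p`.  Then `g₀ + a = p`, and the codimension of
`a ∩ g₀` in `a` equals the codimension of `g₀` in `p`. -/
theorem minimal_overalgebra_ideal_sum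
    (k : Type*) [Field k] (g : Type*) [LieRing g] [LieAlgebra k g]
    (g₀ p : LieSubalgebra k g)
    (heff : ∀ I : LieIdeal k g, (∀ x ∈ I, x ∈ g₀) → I = ⊥)
    (hlt : g₀ < p)
    (hmin : ∀ q : LieSubalgebra k g, g₀ ≤ q → q ≤ p → q = g₀ ∨ q = p)
    (a : LieIdeal k g) (ha : a ≠ ⊥) (hap : ∀ x ∈ a, x ∈ p) :
    (g₀.toSubmodule ⊔ a.toSubmodule = p.toSubmodule) ∧
      Module.rank k
          (↥a.toSubmodule ⧸ (g₀.toSubmodule.comap a.toSubmodule.subtype)) =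
        Module.rank k
          (↥p.toSubmodule ⧸ (g₀.toSubmodule.comap p.toSubmodule.subtype)) := by
  -- the submodule sum is a Lie subalgebra since `a` is an ideal
  set q : LieSubalgebra k g :=
    { g₀.toSubmodule ⊔ a.toSubmodule with
      lie_mem' := by
        intro x y hx hy
        obtain ⟨x₀, hx₀, xa, hxa, rfl⟩ := Submodule.mem_sup.1 hx
        obtain ⟨y₀, hy₀, ya, hya, rfl⟩ := Submodule.mem_sup.1 hy
        refine Submodule.mem_sup.2 ⟨⁅x₀, y₀⁆, g₀.lie_mem hx₀ hy₀,
          ⁅x₀, ya⁆ + ⁅xa, y₀ + ya⁆, ?_, ?_⟩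
        · refine add_mem (a.lie_mem hya) ?_
          have : ⁅xa, y₀ + ya⁆ = -⁅y₀ + ya, xa⁆ := (lie_skew _ _).symm
          rw [this]
          exact neg_mem (a.lie_mem hxa)
        · simp only [lie_add, add_lie]
          abel } with hq
  have hmem : ∀ x, x ∈ q ↔ x ∈ g₀.toSubmodule ⊔ a.toSubmodule := fun x => Iff.rfl
  have hg₀q : g₀ ≤ q := fun x hx => (hmem x).2 (Submodule.mem_sup_left hx)
  have haq : ∀ x ∈ a, x ∈ q := fun x hx => (hmem x).2 (Submodule.mem_sup_right hx)
  have hqp : q ≤ p := by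
    intro x hx
    rw [hmem] at hx
    rw [Submodule.mem_sup] at hx
    obtain ⟨x₀, hx₀, xa, hxa, rfl⟩ := hx
    exact p.add_mem (hlt.le hx₀) (hap _ hxa)
  have hqne : q ≠ g₀ := by
    intro h
    apply ha
    apply heff
    intro x hx
    have := haq x hx
    rw [h] at this
    exact this
  have hqp' : q = p := (hmin q hg₀q hqp).resolve_left hqne
  have hsup : g₀.toSubmodule ⊔ a.toSubmodule = p.toSubmodule := by
    rw [← hqp']
  refine ⟨hsup, ?_⟩
  have e := LinearMap.quotientInfEquivSupQuotient a.toSubmodule g₀.toSubmodule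
  have h2 : a.toSubmodule ⊔ g₀.toSubmodule = p.toSubmodule := by
    rw [sup_comm]; exact hsup
  have h3 : Submodule.comap a.toSubmodule.subtype
      (a.toSubmodule ⊓ g₀.toSubmodule)
      = Submodule.comap a.toSubmodule.subtype g₀.toSubmodule := by
    rw [Submodule.comap_inf, Submodule.comap_subtype_self, top_inf_eq]
  rw [Submodule.comap_subtype_self, top_inf_eq, h2] at e
  exact e.rank_eq
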